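/- Every complex ellipsoid in ℂⁿ is a bombon: for every complex line L, the intersection L ∩ E is either empty, a single point, or a (possibly degenerate) closed disk. -/

import Mathlib

open scoped InnerProductSpace

lemma key_sq {E : Type*} [NormedAddCommGroup E] [InnerProductSpace ℂ E]
    (a w : E) (hw : w ≠ 0) (z : ℂ) :
    ‖a + z • w‖ ^ 2 =
      ‖w‖ ^ 2 * Complex.normSq (z + (starRingEnd ℂ ⟪a, w⟫_ℂ) / ((‖w‖ : ℂ) ^ 2)) +
        (‖a‖ ^ 2 - Complex.normSq ⟪a, w⟫_ℂ / ‖w‖ ^ 2) := by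
  have hW : (‖w‖ : ℝ) ≠ 0 := norm_ne_zero_iff.mpr hw
  have hWc : ((‖w‖ : ℂ)) ^ 2 ≠ 0 := by
    simpa using pow_ne_zero 2 (Complex.ofReal_ne_zero.mpr hW)
  have h1 : ‖a + z • w‖ ^ 2 = ‖a‖ ^ 2 + 2 * Complex.re (z * ⟪a, w⟫_ℂ) + Complex.normSq z * ‖w‖ ^ 2 := by
    rw [@norm_add_sq ℂ]
    simp [inner_smul_right, norm_smul, Complex.normSq_eq_norm_sq]
    ring
  rw [h1]
  have h2 : (z + (starRingEnd ℂ ⟪a, w⟫_ℂ) / ((‖w‖ : ℂ) ^ 2)) =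
      ((‖w‖:ℂ)^2 * z + starRingEnd ℂ ⟪a, w⟫_ℂ) / ((‖w‖ : ℂ) ^ 2) := by
    rw [add_div, mul_div_cancel_left₀ _ hWc]
  rw [h2, Complex.normSq_div]
  set α := ⟪a, w⟫_ℂ
  have h3 : Complex.normSq ((‖w‖:ℂ)^2 * z + starRingEnd ℂ α) =
      ‖w‖^4 * Complex.normSq z + 2 * ‖w‖^2 * Complex.re (z * α) + Complex.normSq α := by
    simp [Complex.normSq_apply, Complex.mul_re, Complex.mul_im, Complex.add_re, Complex.add_im,
      ← Complex.ofReal_pow]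
    ring
  have h4 : Complex.normSq ((‖w‖:ℂ)^2) = ‖w‖^4 := by
    simp [Complex.normSq_apply, ← Complex.ofReal_pow]
    ring
  rw [h3, h4]
  field_simp
  ring

/-- Every complex line meets `K` in the empty set, a single point,
or a (possibly degenerate) closed disk. -/
def IsBombon {n : ℕ} (K : Set (EuclideanSpace ℂ (Fin n))) : Prop :=
  ∀ p v : EuclideanSpace ℂ (Fin n), v ≠ 0 →
    {x | ∃ z : ℂ, x = p + z • v} ∩ K = ∅ ∨
    (∃ x : EuclideanSpace ℂ (Fin n), {x' | ∃ z : ℂ, x' = p + z • v} ∩ K = {x}) ∨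
    (∃ (c : EuclideanSpace ℂ (Fin n)) (r : ℝ), 0 ≤ r ∧ (∃ z : ℂ, c = p + z • v) ∧
      {x | ∃ z : ℂ, x = p + z • v} ∩ K = {x | ∃ z : ℂ, ‖z‖ ≤ r ∧ x = c + z • v})

theorem stmt10 {n : ℕ}
    (L : EuclideanSpace ℂ (Fin n) ≃ₗ[ℂ] EuclideanSpace ℂ (Fin n))
    (b : EuclideanSpace ℂ (Fin n)) :
    IsBombon ((fun x => L x + b) '' Metric.closedBall 0 1) := by
  intro p v hv
  set K : Set (EuclideanSpace ℂ (Fin n)) := (fun x => L x + b) '' Metric.closedBall 0 1 with hK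
  set a : EuclideanSpace ℂ (Fin n) := L.symm (p - b) with ha
  set w : EuclideanSpace ℂ (Fin n) := L.symm v with hwdef
  have hw : w ≠ 0 := by
    simpa [hwdef, LinearEquiv.map_eq_zero_iff] using hv
  have hWpos : (0:ℝ) < ‖w‖ ^ 2 := pow_pos (norm_pos_iff.mpr hw) 2
  set z₀ : ℂ := -(starRingEnd ℂ ⟪a, w⟫_ℂ) / ((‖w‖ : ℂ) ^ 2) with hz₀
  set C : ℝ := ‖a‖ ^ 2 - Complex.normSq ⟪a, w⟫_ℂ / ‖w‖ ^ 2 with hC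
  -- membership criterion
  have hmem : ∀ x, x ∈ K ↔ ‖L.symm (x - b)‖ ≤ 1 := by
    intro x
    constructor
    · rintro ⟨y, hy, rfl⟩
      simpa using mem_closedBall_zero_iff.mp hy
    · intro h
      exact ⟨L.symm (x - b), mem_closedBall_zero_iff.mpr h, by simp⟩
  have hline : ∀ z : ℂ, L.symm (p + z • v - b) = a + z • w := by
    intro z
    have : p + z • v - b = (p - b) + z • v := by abel
    rw [this, map_add, map_smul]
  have cond : ∀ z : ℂ, (p + z • v ∈ K) ↔ ‖w‖ ^ 2 * Complex.normSq (z - z₀) ≤ 1 - C := by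
    intro z
    rw [hmem, hline]
    have h1 : ‖a + z • w‖ ≤ 1 ↔ ‖a + z • w‖ ^ 2 ≤ 1 ^ 2 :=
      (pow_le_pow_iff_left₀ (norm_nonneg _) zero_le_one two_ne_zero).symm
    have h2 : z - z₀ = z + (starRingEnd ℂ ⟪a, w⟫_ℂ) / ((‖w‖ : ℂ) ^ 2) := by
      rw [hz₀]; ring
    rw [h1, key_sq a w hw z, ← h2, hC]
    constructor <;> intro h <;> linarith
  rcases lt_or_ge (1 - C) 0 with hneg | hpos
  · left
    rw [Set.eq_empty_iff_forall_notMem]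
    rintro x ⟨⟨z, rfl⟩, hxK⟩
    have := (cond z).mp hxK
    nlinarith [Complex.normSq_nonneg (z - z₀)]
  · right; right
    refine ⟨p + z₀ • v, Real.sqrt ((1 - C) / ‖w‖ ^ 2), Real.sqrt_nonneg _, ⟨z₀, rfl⟩, ?_⟩
    have hr2 : Real.sqrt ((1 - C) / ‖w‖ ^ 2) ^ 2 = (1 - C) / ‖w‖ ^ 2 :=
      Real.sq_sqrt (div_nonneg hpos hWpos.le)
    ext x
    simp only [Set.mem_inter_iff, Set.mem_setOf_eq]
    constructor
    · rintro ⟨⟨z, rfl⟩, hxK⟩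
      refine ⟨z - z₀, ?_, ?_⟩
      · have h := (cond z).mp hxK
        have hns : Complex.normSq (z - z₀) = ‖z - z₀‖ ^ 2 := by
          rw [Complex.normSq_eq_norm_sq]
        have hb : ‖z - z₀‖ ^ 2 ≤ (1 - C) / ‖w‖ ^ 2 := by
          rw [← hns, le_div_iff₀ hWpos]; linarith
        calc ‖z - z₀‖ = Real.sqrt (‖z - z₀‖ ^ 2) := (Real.sqrt_sq (norm_nonneg _)).symm
          _ ≤ Real.sqrt ((1 - C) / ‖w‖ ^ 2) := Real.sqrt_le_sqrt hb
      · module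
    · rintro ⟨z, hz, rfl⟩
      refine ⟨⟨z₀ + z, by module⟩, ?_⟩
      have hx : p + z₀ • v + z • v = p + (z₀ + z) • v := by module
      rw [hx, cond (z₀ + z)]
      have : Complex.normSq (z₀ + z - z₀) = ‖z‖ ^ 2 := by
        simp [Complex.normSq_eq_norm_sq]
      rw [this]
      have h2 : ‖z‖ ^ 2 ≤ (1 - C) / ‖w‖ ^ 2 := by
        rw [← hr2]
        exact pow_le_pow_left₀ (norm_nonneg _) hz 2
      calc ‖w‖ ^ 2 * ‖z‖ ^ 2 ≤ ‖w‖ ^ 2 * ((1 - C) / ‖w‖ ^ 2) :=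
            mul_le_mul_of_nonneg_left h2 hWpos.le
        _ = 1 - C := by field_simp
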